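/- For λ, μ > 0 and t > 0: (1/(2√π·t^{3/2}))·∫₀^∞ ξ·exp(−ξ²/(4t))·(−μ·sinh(λξ))dξ = −λμ·exp(λ²t). -/

import Mathlib

open Real MeasureTheory Set

lemma odd_gauss_zero {a : ℝ} (ha : 0 < a) :
    ∫ x : ℝ, x * Real.exp (-a * x ^ 2) = 0 := by
  have h : ∫ x : ℝ, x * Real.exp (-a * x ^ 2)
      = - ∫ x : ℝ, x * Real.exp (-a * x ^ 2) := by
    conv_lhs => rw [← integral_neg_eq_self (fun x : ℝ => x * Real.exp (-a * x ^ 2))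
      (volume : Measure ℝ)]
    rw [← integral_neg]
    congr 1
    funext x
    rw [neg_sq]
    ring
  linarith

lemma gauss_lin_integral {a : ℝ} (ha : 0 < a) (c : ℝ) :
    ∫ x : ℝ, x * Real.exp (-a * x ^ 2 + c * x)
      = c / (2 * a) * Real.sqrt (π / a) * Real.exp (c ^ 2 / (4 * a)) := by
  set d : ℝ := c / (2 * a) with hd
  have key : ∀ x : ℝ, (x + d) * Real.exp (-a * (x + d) ^ 2 + c * (x + d))
      = x * Real.exp (-a * x ^ 2) * Real.exp (c ^ 2 / (4 * a))
        + d * (Real.exp (-a * x ^ 2) * Real.exp (c ^ 2 / (4 * a))) := by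
    intro x
    rw [show -a * (x + d) ^ 2 + c * (x + d) = -a * x ^ 2 + c ^ 2 / (4 * a) from by
      rw [hd]; field_simp; ring, Real.exp_add]
    ring
  have h1 : (∫ x : ℝ, x * Real.exp (-a * x ^ 2 + c * x))
      = ∫ x : ℝ, (x + d) * Real.exp (-a * (x + d) ^ 2 + c * (x + d)) := by
    exact (integral_add_right_eq_self (fun x : ℝ => x * Real.exp (-a * x ^ 2 + c * x)) d).symm
  rw [h1]
  simp_rw [key]
  rw [integral_add (((integrable_mul_exp_neg_mul_sq ha).mul_const _))
      (((integrable_exp_neg_mul_sq ha).mul_const _).const_mul d)]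
  have h2 : ∫ x : ℝ, x * Real.exp (-a * x ^ 2) * Real.exp (c ^ 2 / (4 * a)) = 0 := by
    rw [integral_mul_const, odd_gauss_zero ha, zero_mul]
  rw [h2, zero_add, integral_const_mul, integral_mul_const, integral_gaussian]
  ring

lemma gauss_lin_integrable {a : ℝ} (ha : 0 < a) (c : ℝ) :
    Integrable (fun x : ℝ => x * Real.exp (-a * x ^ 2 + c * x)) := by
  set d : ℝ := c / (2 * a) with hd
  have key : ∀ x : ℝ, (x + d) * Real.exp (-a * (x + d) ^ 2 + c * (x + d))
      = x * Real.exp (-a * x ^ 2) * Real.exp (c ^ 2 / (4 * a))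
        + d * (Real.exp (-a * x ^ 2) * Real.exp (c ^ 2 / (4 * a))) := by
    intro x
    rw [show -a * (x + d) ^ 2 + c * (x + d) = -a * x ^ 2 + c ^ 2 / (4 * a) from by
      rw [hd]; field_simp; ring, Real.exp_add]
    ring
  have h : Integrable (fun x : ℝ => (x + d) * Real.exp (-a * (x + d) ^ 2 + c * (x + d))) := by
    have := ((integrable_mul_exp_neg_mul_sq ha).mul_const (Real.exp (c ^ 2 / (4 * a)))).add
      (((integrable_exp_neg_mul_sq ha).mul_const (Real.exp (c ^ 2 / (4 * a)))).const_mul d)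
    exact this.congr (Filter.Eventually.of_forall fun x => (key x).symm)
  have hmp : MeasureTheory.MeasurePreserving (fun x : ℝ => x + d) volume volume :=
    measurePreserving_add_right volume d
  have hemb : MeasurableEmbedding (fun x : ℝ => x + d) :=
    (Homeomorph.addRight d).measurableEmbedding
  exact (hmp.integrable_comp_emb hemb).mp h

theorem stmt16 (lam μ t : ℝ) (hlam : 0 < lam) (hμ : 0 < μ) (ht : 0 < t) :
    1 / (2 * Real.sqrt Real.pi * t ^ ((3:ℝ)/2)) *
        ∫ ξ in Set.Ioi (0:ℝ), ξ * Real.exp (-ξ ^ 2 / (4 * t)) * (-μ * Real.sinh (lam * ξ))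
      = -lam * μ * Real.exp (lam ^ 2 * t) := by
  set a : ℝ := 1 / (4 * t) with hadef
  have ha : 0 < a := by positivity
  set f : ℝ → ℝ := fun ξ => ξ * Real.exp (-ξ ^ 2 / (4 * t)) * (-μ * Real.sinh (lam * ξ)) with hf
  -- evenness
  have heven : ∀ x : ℝ, f |x| = f x := by
    intro x
    rcases le_or_gt 0 x with h | h
    · rw [abs_of_nonneg h]
    · rw [abs_of_neg h]
      simp only [hf, neg_neg, mul_neg, Real.sinh_neg, neg_sq]
      ring
  have hIoi : (∫ ξ in Set.Ioi (0:ℝ), f ξ) = (∫ x : ℝ, f x) / 2 := by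
    have := integral_comp_abs (f := f)
    simp_rw [heven] at this
    rw [this]; ring
  -- pointwise decomposition
  have hdecomp : ∀ x : ℝ, f x = (-μ / 2) * (x * Real.exp (-a * x ^ 2 + lam * x))
      - (-μ / 2) * (x * Real.exp (-a * x ^ 2 + (-lam) * x)) := by
    intro x
    simp only [hf, Real.sinh_eq]
    rw [show -a * x ^ 2 + lam * x = -x ^ 2 / (4 * t) + lam * x by rw [hadef]; ring,
      show -a * x ^ 2 + (-lam) * x = -x ^ 2 / (4 * t) + (-lam) * x by rw [hadef]; ring,
      Real.exp_add, Real.exp_add]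
    rw [show (-lam) * x = -(lam * x) by ring]
    ring
  have hR : (∫ x : ℝ, f x) = (-μ / 2) * (lam / (2 * a) * Real.sqrt (π / a)
        * Real.exp (lam ^ 2 / (4 * a)))
      - (-μ / 2) * ((-lam) / (2 * a) * Real.sqrt (π / a)
        * Real.exp ((-lam) ^ 2 / (4 * a))) := by
    simp_rw [hdecomp]
    rw [integral_sub ((gauss_lin_integrable ha lam).const_mul _)
        ((gauss_lin_integrable ha (-lam)).const_mul _),
      integral_const_mul, integral_const_mul, gauss_lin_integral ha lam,
      gauss_lin_integral ha (-lam)]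
  rw [hIoi, hR]
  have h4a : lam ^ 2 / (4 * a) = lam ^ 2 * t := by
    rw [hadef]; field_simp
  have hsqrt : Real.sqrt (π / a) = 2 * Real.sqrt π * Real.sqrt t := by
    rw [hadef]
    rw [show π / (1 / (4 * t)) = 4 * t * π by field_simp]
    rw [show (4 : ℝ) * t * π = (2 * Real.sqrt t * Real.sqrt π) ^ 2 by
      rw [mul_pow, mul_pow, Real.sq_sqrt ht.le, Real.sq_sqrt Real.pi_pos.le]; ring]
    rw [Real.sqrt_sq (by positivity)]
    ring
  have ht32 : t ^ ((3:ℝ)/2) = t * Real.sqrt t := by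
    rw [show (3:ℝ)/2 = 1 + 1/2 by norm_num, Real.rpow_add ht, Real.rpow_one,
      ← Real.sqrt_eq_rpow]
  rw [h4a, neg_sq, h4a, hsqrt, ht32, hadef]
  have hst : Real.sqrt t ≠ 0 := by positivity
  have hsp : Real.sqrt π ≠ 0 := by positivity
  field_simp
  ring
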